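/- Let b > 0, c > 0, α ∈ ℝ and set β = 1 − α. Let ε : [b,∞) → ℝ be a continuously differentiable function with ε(t) → 0 as t → ∞, let L(t) = c·exp(∫_b^t ε(s)/s ds) and a(t) = t^α·L(t), and define μ(t) = −t²·a''(t)/a(t) for t > b. Then the limit lim_{x→∞} x·∫_x^∞ μ(t)/t² dt exists and equals α(1−α), and moreover α(1−α) ≤ 1/4. -/

import Mathlib

open Real Filter Set intervalIntegral

section aux

open MeasureTheory

variable {b c α : ℝ} {ε : ℝ → ℝ}

/-- boundedness of a continuous function tending to zero -/
lemma aux_bound (hb : 0 < b) (hεc : ContinuousOn ε (Set.Ici b))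
    (hε0 : Tendsto ε atTop (nhds 0)) : ∃ M : ℝ, 0 ≤ M ∧ ∀ t, b ≤ t → |ε t| ≤ M := by
  have h1 : ∀ᶠ t in atTop, |ε t| ≤ 1 := by
    have := hε0 (Metric.closedBall_mem_nhds 0 one_pos)
    filter_upwards [this] with t ht
    simpa [Real.dist_eq] using ht
  obtain ⟨T, hT⟩ := eventually_atTop.1 h1
  obtain ⟨M₀, hM₀⟩ := (isCompact_Icc (a := b) (b := max b T)).exists_bound_of_continuousOn
    (hεc.mono Icc_subset_Ici_self)
  refine ⟨max M₀ 1, le_trans zero_le_one (le_max_right _ _), fun t htb => ?_⟩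
  rcases le_total t (max b T) with h | h
  · exact le_trans (by simpa using hM₀ t ⟨htb, h⟩) (le_max_left _ _)
  · exact le_trans (hT t (le_trans (le_max_right b T) h)) (le_max_right _ _)

end aux

/-- Proposition 2: for a normalized regularly varying solution `a(t) = t^α L(t)` of the
acceleration equation with `μ(t) = -t² a''(t)/a(t)`, the Marić limit
`Γ = lim_{x→∞} x ∫_x^∞ μ(t)/t² dt` exists, equals `α(1-α)`, and is `≤ 1/4`. -/
theorem stmt_0 (b c α : ℝ) (hb : 0 < b) (hc : 0 < c)
    (ε : ℝ → ℝ) (hε : ContDiffOn ℝ 1 ε (Set.Ici b))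
    (hε0 : Tendsto ε atTop (nhds 0))
    (L a μ : ℝ → ℝ)
    (hL : ∀ t, L t = c * Real.exp (∫ s in (b)..t, ε s / s))
    (ha : ∀ t, a t = t ^ α * L t)
    (hμ : ∀ t, b < t → μ t = -(t ^ 2 * deriv (deriv a) t / a t)) :
    ∃ I : ℝ → ℝ,
      (∀ x, b < x →
        Tendsto (fun y => ∫ t in (x)..y, μ t / t ^ 2) atTop (nhds (I x))) ∧
      Tendsto (fun x => x * I x) atTop (nhds (α * (1 - α))) ∧
      α * (1 - α) ≤ 1 / 4 := by
  have hεc : ContinuousOn ε (Set.Ici b) := hε.continuousOn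
  have hεIoi : ContinuousOn ε (Set.Ioi b) := hεc.mono Ioi_subset_Ici_self
  have hderivε : ContinuousOn (deriv ε) (Set.Ioi b) :=
    (hε.mono Ioi_subset_Ici_self).continuousOn_deriv_of_isOpen isOpen_Ioi le_rfl
  have hεdiff : ∀ t, b < t → HasDerivAt ε (deriv ε t) t := by
    intro t ht
    exact ((hε.differentiableOn one_ne_zero).differentiableAt (Ici_mem_nhds ht)).hasDerivAt
  -- the logarithmic derivative
  set h : ℝ → ℝ := fun t => (α + ε t) / t with hh_def
  -- FTC-1 : derivative of the integral
  set F : ℝ → ℝ := fun t => ∫ s in (b)..t, ε s / s with hF_def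
  have hcont_integrand : ContinuousOn (fun s => ε s / s) (Set.Ici b) :=
    hεc.div continuousOn_id (fun s hs => (lt_of_lt_of_le hb hs).ne')
  have hF : ∀ t, b < t → HasDerivAt F (ε t / t) t := by
    intro t ht
    have hInt : IntervalIntegrable (fun s => ε s / s) MeasureTheory.volume b t := by
      apply ContinuousOn.intervalIntegrable
      apply hcont_integrand.mono
      rw [uIcc_of_le ht.le]
      exact Icc_subset_Ici_self
    have hmeas := ContinuousOn.stronglyMeasurableAtFilter (μ := MeasureTheory.volume)
      isOpen_Ioi (hcont_integrand.mono Ioi_subset_Ici_self) t ht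
    exact intervalIntegral.integral_hasDerivAt_right hInt hmeas
      ((hcont_integrand.mono Ioi_subset_Ici_self).continuousAt (Ioi_mem_nhds ht))
  -- first derivative of a
  have haeq : a = fun u => u ^ α * (c * Real.exp (F u)) := funext fun u => by rw [ha, hL]
  have hapos : ∀ t, 0 < t → 0 < a t := by
    intro t ht; rw [ha, hL]; positivity
  have haderiv : ∀ t, b < t → HasDerivAt a (a t * h t) t := by
    intro t ht
    have ht0 : 0 < t := hb.trans ht
    have h1 : HasDerivAt (fun u => c * Real.exp (F u)) (c * Real.exp (F t) * (ε t / t)) t := by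
      have := ((hF t ht).exp).const_mul c
      rw [mul_assoc]; exact this
    have h2 : HasDerivAt (fun u : ℝ => u ^ α) (α * t ^ (α - 1)) t :=
      Real.hasDerivAt_rpow_const (Or.inl ht0.ne')
    have h3 := h2.mul h1
    rw [haeq]
    refine h3.congr_deriv ?_
    have hpow : t ^ (α - 1) = t ^ α / t := by
      rw [Real.rpow_sub ht0, Real.rpow_one]
    rw [hh_def, hpow]
    field_simp
  have hda : ∀ t, b < t → deriv a t = a t * h t := fun t ht => (haderiv t ht).deriv
  -- derivative of h
  have hh' : ∀ t, b < t → HasDerivAt h (deriv ε t / t - (α + ε t) / t ^ 2) t := by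
    intro t ht
    have ht0 : 0 < t := hb.trans ht
    have := ((hasDerivAt_const t α).add (hεdiff t ht)).div (hasDerivAt_id t) ht0.ne'
    refine this.congr_deriv ?_
    simp only [id, Pi.add_apply]
    field_simp
    ring
  -- second derivative of a and the formula for μ/t²
  have hd2 : ∀ t, b < t → deriv (deriv a) t = a t * ((h t) ^ 2 + deriv h t) := by
    intro t ht
    have heq : deriv a =ᶠ[nhds t] fun s => a s * h s := by
      filter_upwards [Ioi_mem_nhds ht] with s hs using hda s hs
    rw [Filter.EventuallyEq.deriv_eq heq]
    have h1 := (haderiv t ht).mul (hh' t ht)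
    rw [show (fun s => a s * h s) = a * h from rfl, h1.deriv, (hh' t ht).deriv]
    ring
  have hμ2 : ∀ t, b < t → μ t / t ^ 2 = -((h t) ^ 2 + deriv h t) := by
    intro t ht
    have ht0 : 0 < t := hb.trans ht
    have hane : a t ≠ 0 := (hapos t ht0).ne'
    rw [hμ t ht, hd2 t ht]
    field_simp
  -- continuity facts
  have hconth : ContinuousOn h (Set.Ioi b) :=
    (continuousOn_const.add hεIoi).div continuousOn_id (fun t ht => (hb.trans ht).ne')
  have hcontdh : ContinuousOn (deriv h) (Set.Ioi b) := by
    have hcf : ContinuousOn (fun t => deriv ε t / t - (α + ε t) / t ^ 2) (Set.Ioi b) := by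
      exact (hderivε.div continuousOn_id (fun t ht => (hb.trans ht).ne')).sub
        ((continuousOn_const.add hεIoi).div ((continuous_pow 2).continuousOn)
          (fun t ht => pow_ne_zero 2 (hb.trans ht).ne'))
    exact hcf.congr (fun t ht => (hh' t ht).deriv)
  -- bound on ε
  obtain ⟨M, hM0, hM⟩ := aux_bound hb hεc hε0
  -- integrability of h² on Ioi x
  have hint : ∀ x, b < x → MeasureTheory.IntegrableOn (fun t => (h t) ^ 2) (Set.Ioi x) := by
    intro x hx
    have hx0 : 0 < x := hb.trans hx
    refine MeasureTheory.Integrable.mono'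
      (g := fun t => (|α| + M) ^ 2 * t ^ (-2 : ℝ)) ?_ ?_ ?_
    · exact (integrableOn_Ioi_rpow_of_lt (by norm_num) hx0).const_mul _
    · exact ((hconth.mono (Ioi_subset_Ioi hx.le)).pow 2).aestronglyMeasurable measurableSet_Ioi
    · filter_upwards [MeasureTheory.ae_restrict_mem measurableSet_Ioi] with t ht
      have htx : x < t := ht
      have ht0 : 0 < t := hx0.trans htx
      have h1 : |h t| ≤ (|α| + M) / t := by
        rw [hh_def]
        rw [abs_div, abs_of_pos ht0]
        gcongr
        exact (abs_add_le _ _).trans (by gcongr; exact hM t (hx.trans htx).le)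
      have h2 : ‖(h t) ^ 2‖ = |h t| ^ 2 := by
        rw [Real.norm_eq_abs, abs_pow, sq_abs, ← sq_abs]
      rw [h2]
      calc |h t| ^ 2 ≤ ((|α| + M) / t) ^ 2 := by
            exact pow_le_pow_left₀ (abs_nonneg _) h1 2
        _ = (|α| + M) ^ 2 * t ^ (-2 : ℝ) := by
            rw [div_pow, Real.rpow_neg ht0.le, div_eq_mul_inv]
            norm_num [Real.rpow_natCast t 2]
  -- h tends to 0 at infinity
  have hh0 : Tendsto h atTop (nhds 0) := by
    have h1 : Tendsto (fun t : ℝ => (α + ε t) * t⁻¹) atTop (nhds ((α + 0) * 0)) :=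
      (tendsto_const_nhds.add hε0).mul tendsto_inv_atTop_zero
    simpa [hh_def, div_eq_mul_inv] using h1
  -- the candidate limit function
  refine ⟨fun x => h x - ∫ t in Set.Ioi x, (h t) ^ 2, ?_, ?_, by nlinarith [sq_nonneg (α - 1/2)]⟩
  · -- convergence of the improper integral
    intro x hx
    have hx0 : 0 < x := hb.trans hx
    have key : ∀ y, x ≤ y →
        (∫ t in (x)..y, μ t / t ^ 2) = (h x - h y) - ∫ t in (x)..y, (h t) ^ 2 := by
      intro y hy
      have hsub : Set.uIcc x y ⊆ Set.Ioi b := by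
        rw [uIcc_of_le hy]
        exact fun t htt => lt_of_lt_of_le hx htt.1
      have hcong : (∫ t in (x)..y, μ t / t ^ 2)
          = ∫ t in (x)..y, (-(deriv h t) - (h t) ^ 2) := by
        apply intervalIntegral.integral_congr
        intro t htt
        show μ t / t ^ 2 = -(deriv h t) - (h t) ^ 2
        rw [hμ2 t (hsub htt)]
        ring
      rw [hcong]
      have hint1 : IntervalIntegrable (deriv h) MeasureTheory.volume x y :=
        (hcontdh.mono hsub).intervalIntegrable
      have hint2 : IntervalIntegrable (fun t => (h t) ^ 2) MeasureTheory.volume x y :=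
        ((hconth.mono hsub).pow 2).intervalIntegrable
      have hs : (∫ t in (x)..y, (-(deriv h t) - (h t) ^ 2))
          = (∫ t in (x)..y, -(deriv h t)) - ∫ t in (x)..y, (h t) ^ 2 :=
        intervalIntegral.integral_sub hint1.neg hint2
      rw [hs, intervalIntegral.integral_neg]
      have hftc : (∫ t in (x)..y, deriv h t) = h y - h x := by
        apply intervalIntegral.integral_deriv_eq_sub _ hint1
        intro t htt
        exact (hh' t (hsub htt)).differentiableAt
      rw [hftc]
      ring
    have h1 : Tendsto (fun y => (h x - h y) - ∫ t in (x)..y, (h t) ^ 2) atTop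
        (nhds ((h x - 0) - ∫ t in Set.Ioi x, (h t) ^ 2)) := by
      exact (tendsto_const_nhds.sub hh0).sub
        (MeasureTheory.intervalIntegral_tendsto_integral_Ioi x (hint x hx) tendsto_id)
    rw [show h x - 0 - ∫ t in Set.Ioi x, (h t) ^ 2
        = h x - ∫ t in Set.Ioi x, (h t) ^ 2 by ring] at h1
    apply h1.congr'
    filter_upwards [eventually_ge_atTop x] with y hy
    exact (key y hy).symm
  · -- the Marić limit equals α(1-α)
    have part1 : Tendsto (fun x => x * h x) atTop (nhds α) := by
      have : Tendsto (fun x => α + ε x) atTop (nhds (α + 0)) := tendsto_const_nhds.add hε0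
      rw [add_zero] at this
      apply this.congr'
      filter_upwards [eventually_gt_atTop (0 : ℝ)] with x hx0
      rw [hh_def]
      field_simp
    have part2 : Tendsto (fun x => x * ∫ t in Set.Ioi x, (h t) ^ 2) atTop (nhds (α ^ 2)) := by
      rw [Metric.tendsto_atTop]
      intro δ hδ
      have hδ2 : 0 < δ / 2 := by linarith
      have hev : ∀ᶠ t in atTop, |ε t| * (2 * |α| + 1) ≤ δ / 2 ∧ |ε t| ≤ 1 := by
        have h1 : ∀ᶠ t in atTop, |ε t| ≤ min 1 ((δ / 2) / (2 * |α| + 1)) := by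
          have hpos : (0 : ℝ) < min 1 ((δ / 2) / (2 * |α| + 1)) := by
            apply lt_min one_pos
            apply div_pos hδ2
            positivity
          filter_upwards [hε0 (Metric.closedBall_mem_nhds 0 hpos)] with t ht
          simpa [Real.dist_eq] using ht
        filter_upwards [h1] with t ht
        constructor
        · have h2 : |ε t| ≤ (δ / 2) / (2 * |α| + 1) := ht.trans (min_le_right _ _)
          calc |ε t| * (2 * |α| + 1) ≤ ((δ / 2) / (2 * |α| + 1)) * (2 * |α| + 1) := by
                gcongr
            _ = δ / 2 := by field_simp
        · exact ht.trans (min_le_left _ _)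
      obtain ⟨X₀, hX₀⟩ := eventually_atTop.1 hev
      refine ⟨max X₀ (b + 1), fun x hxX => ?_⟩
      have hxb : b < x := lt_of_lt_of_le (by linarith) (le_trans (le_max_right _ _) hxX)
      have hx0 : 0 < x := hb.trans hxb
      have hxX₀ : X₀ ≤ x := le_trans (le_max_left _ _) hxX
      -- integrable reference functions
      have hintref : MeasureTheory.IntegrableOn (fun t : ℝ => t ^ (-2 : ℝ)) (Set.Ioi x) :=
        integrableOn_Ioi_rpow_of_lt (by norm_num) hx0
      have hval : (∫ t in Set.Ioi x, t ^ (-2 : ℝ)) = x⁻¹ := by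
        rw [integral_Ioi_rpow_of_lt (by norm_num) hx0]
        norm_num [Real.rpow_neg_one]
      have hsplit : (∫ t in Set.Ioi x, (h t) ^ 2)
          = (∫ t in Set.Ioi x, ((h t) ^ 2 - α ^ 2 * t ^ (-2 : ℝ))) + α ^ 2 * x⁻¹ := by
        rw [← hval, ← MeasureTheory.integral_const_mul,
          MeasureTheory.integral_sub (hint x hxb) (hintref.const_mul _)]
        ring
      have hbnd : ‖∫ t in Set.Ioi x, ((h t) ^ 2 - α ^ 2 * t ^ (-2 : ℝ))‖
          ≤ (δ / 2) * x⁻¹ := by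
        have := MeasureTheory.norm_integral_le_of_norm_le
          (f := fun t => (h t) ^ 2 - α ^ 2 * t ^ (-2 : ℝ))
          (g := fun t => (δ / 2) * t ^ (-2 : ℝ)) (hintref.const_mul _) ?_
        · rw [MeasureTheory.integral_const_mul, hval] at this
          exact this
        · filter_upwards [MeasureTheory.ae_restrict_mem measurableSet_Ioi] with t ht
          have htx : x < t := ht
          have ht0 : 0 < t := hx0.trans htx
          have htX : X₀ ≤ t := hxX₀.trans htx.le
          obtain ⟨hε1, hε2⟩ := hX₀ t htX
          have hrpow : t ^ (-2 : ℝ) = (t ^ 2)⁻¹ := by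
            rw [Real.rpow_neg ht0.le]
            norm_num [Real.rpow_natCast t 2]
          have heq : (h t) ^ 2 - α ^ 2 * t ^ (-2 : ℝ)
              = (ε t * (2 * α + ε t)) * (t ^ 2)⁻¹ := by
            rw [hh_def, hrpow, div_pow]
            field_simp
            ring
          rw [heq, Real.norm_eq_abs, abs_mul, abs_inv, abs_pow, abs_of_pos ht0, hrpow]
          apply mul_le_mul_of_nonneg_right _ (by positivity)
          rw [abs_mul]
          calc |ε t| * |2 * α + ε t| ≤ |ε t| * (2 * |α| + 1) := by
                gcongr
                calc |2 * α + ε t| ≤ |2 * α| + |ε t| := abs_add_le _ _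
                  _ ≤ 2 * |α| + 1 := by rw [abs_mul, abs_two]; gcongr
            _ ≤ δ / 2 := hε1
      rw [Real.dist_eq, hsplit]
      have : |x * ((∫ t in Set.Ioi x, ((h t) ^ 2 - α ^ 2 * t ^ (-2 : ℝ))) + α ^ 2 * x⁻¹) - α ^ 2|
          = |x| * |∫ t in Set.Ioi x, ((h t) ^ 2 - α ^ 2 * t ^ (-2 : ℝ))| := by
        rw [← abs_mul]
        congr 1
        field_simp
        ring
      rw [this, abs_of_pos hx0]
      calc x * |∫ t in Set.Ioi x, ((h t) ^ 2 - α ^ 2 * t ^ (-2 : ℝ))|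
          ≤ x * ((δ / 2) * x⁻¹) := by
            gcongr
            exact hbnd
        _ = δ / 2 := by field_simp
        _ < δ := by linarith
    have := part1.sub part2
    rw [show α - α ^ 2 = α * (1 - α) by ring] at this
    apply this.congr
    intro x
    ring
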